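/- arXiv:2409.11268 — 2 statements merged into one kernel-verified Lean document; each statement's English description precedes it below -/
import Mathlib

section
/- For all n ≥ 1, the forward difference a_{n+1} - a_n equals |B(2n-2)|, the number of binary partitions of 2n-2. -/
/-- `pre2 s` is the multiset of all pairwise products of two distinct entries
(by position) of the multiset `s`, i.e. the summands of `e₂` evaluated at `s`. -/
def pre2 (s : Multiset ℕ) : Multiset ℕ := (Multiset.powersetCard 2 s).map Multiset.prod

open Classical in
/-- The finset of binary partitions of `n`: partitions all of whose parts are powers of 2. -/
noncomputable def binaryPartitions (n : ℕ) : Finset (Nat.Partition n) :=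
  Finset.univ.filter fun l => ∀ p ∈ l.parts, ∃ i : ℕ, p = 2 ^ i

/-- `a n = m₁(ImB₂(n))`: the total number of parts equal to 1 in the image of `pre2`
on binary partitions of `n` with at least two parts; by injectivity this equals
`∑_{λ ∈ B(n)} C(m₁(λ), 2)`. -/
noncomputable def a (n : ℕ) : ℕ :=
  ∑ l ∈ binaryPartitions n, Nat.choose (l.parts.count 1) 2

/- ### Auxiliary development -/

lemma mem_bp {n : ℕ} {l : Nat.Partition n} :
    l ∈ binaryPartitions n ↔ ∀ p ∈ l.parts, ∃ i : ℕ, p = 2 ^ i := by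
  simp [binaryPartitions]

noncomputable def bcard (n : ℕ) : ℕ := (binaryPartitions n).card

noncomputable def Tsum (n : ℕ) : ℕ := ∑ l ∈ binaryPartitions n, l.parts.count 1

open Classical in
noncomputable def Ncard (n : ℕ) : ℕ :=
  ((binaryPartitions n).filter (fun l => 1 ∉ l.parts)).card

def add1 {n : ℕ} (l : Nat.Partition n) : Nat.Partition (n + 1) where
  parts := 1 ::ₘ l.parts
  parts_pos := by
    intro p hp
    rcases Multiset.mem_cons.1 hp with h | h
    · simp [h]
    · exact l.parts_pos h
  parts_sum := by simp [l.parts_sum, add_comm]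

def erase1 {n : ℕ} (l : Nat.Partition (n + 1)) (h : 1 ∈ l.parts) : Nat.Partition n where
  parts := l.parts.erase 1
  parts_pos := fun hp => l.parts_pos (Multiset.mem_of_mem_erase hp)
  parts_sum := by
    have h2 : (1 ::ₘ l.parts.erase 1).sum = n + 1 := by
      rw [Multiset.cons_erase h, l.parts_sum]
    simp only [Multiset.sum_cons] at h2
    omega

lemma master (g : ℕ → ℕ) (n : ℕ) :
    ∑ l ∈ binaryPartitions (n + 1), g (l.parts.count 1)
      = Ncard (n + 1) * g 0 + ∑ l ∈ binaryPartitions n, g (l.parts.count 1 + 1) := by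
  classical
  rw [← Finset.sum_filter_add_sum_filter_not (binaryPartitions (n + 1))
    (fun l => 1 ∉ l.parts) (fun l => g (l.parts.count 1))]
  congr 1
  · rw [Finset.sum_congr rfl (fun l hl => ?_), Finset.sum_const, smul_eq_mul, Ncard]
    have h1 : 1 ∉ l.parts := (Finset.mem_filter.1 hl).2
    rw [Multiset.count_eq_zero.2 h1]
  · refine Finset.sum_bij'
      (i := fun l hl => erase1 l (not_not.1 (Finset.mem_filter.1 hl).2))
      (j := fun l _ => add1 l) ?_ ?_ ?_ ?_ ?_
    · intro l hl
      rw [mem_bp]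
      intro p hp
      exact (mem_bp.1 (Finset.mem_filter.1 hl).1) p (Multiset.mem_of_mem_erase hp)
    · intro l hl
      refine Finset.mem_filter.2 ⟨mem_bp.2 ?_, ?_⟩
      · intro p hp
        rcases Multiset.mem_cons.1 hp with h | h
        · exact ⟨0, by simp [h]⟩
        · exact mem_bp.1 hl p h
      · simp [add1]
    · intro l hl
      apply Nat.Partition.ext
      exact Multiset.cons_erase (not_not.1 (Finset.mem_filter.1 hl).2)
    · intro l _
      apply Nat.Partition.ext
      exact Multiset.erase_cons_head 1 l.parts
    · intro l hl
      have h1 : 1 ∈ l.parts := not_not.1 (Finset.mem_filter.1 hl).2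
      have hc : (l.parts.erase 1).count 1 + 1 = l.parts.count 1 := by
        rw [Multiset.count_erase_self]
        have := Multiset.one_le_count_iff_mem.2 h1
        omega
      simp only [erase1]
      rw [hc]

lemma bcard_succ (n : ℕ) : bcard (n + 1) = Ncard (n + 1) + bcard n := by
  have h := master (fun _ => 1) n
  simp only [Finset.sum_const, smul_eq_mul, mul_one] at h
  rw [bcard, bcard, h]

lemma Tsum_succ (n : ℕ) : Tsum (n + 1) = Tsum n + bcard n := by
  have h := master id n
  simp only [id, mul_zero, zero_add, Finset.sum_add_distrib, Finset.sum_const,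
    smul_eq_mul, mul_one] at h
  rw [Tsum, Tsum, bcard, h]

lemma choose_two_succ (k : ℕ) : Nat.choose (k + 1) 2 = Nat.choose k 2 + k := by
  rw [Nat.choose_two_right, Nat.choose_two_right]
  rcases k with _ | k
  · rfl
  · simp only [Nat.add_sub_cancel]
    have : (k + 1 + 1) * (k + 1) = (k + 1) * k + 2 * (k + 1) := by ring
    omega

lemma a_succ (n : ℕ) : a (n + 1) = a n + Tsum n := by
  have h := master (fun k => Nat.choose k 2) n
  simp only [Nat.choose_zero_succ, mul_zero, zero_add, choose_two_succ,
    Finset.sum_add_distrib] at h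
  rw [a, h, a, Tsum]

lemma even_of_bp_no_one {n : ℕ} {l : Nat.Partition n}
    (hb : ∀ p ∈ l.parts, ∃ i : ℕ, p = 2 ^ i) (h1 : 1 ∉ l.parts) :
    ∀ p ∈ l.parts, 2 ∣ p := by
  intro p hp
  obtain ⟨i, hi⟩ := hb p hp
  cases i with
  | zero => simp only [pow_zero] at hi; exact absurd (hi ▸ hp) h1
  | succ j => exact ⟨2 ^ j, by rw [hi, pow_succ]; ring⟩

lemma Ncard_odd (m : ℕ) : Ncard (2 * m + 1) = 0 := by
  classical
  rw [Ncard, Finset.card_eq_zero]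
  apply Finset.eq_empty_of_forall_notMem
  intro l hl
  have h1 : 1 ∉ l.parts := (Finset.mem_filter.1 hl).2
  have hb := mem_bp.1 (Finset.mem_filter.1 hl).1
  have hdvd : (2 : ℕ) ∣ l.parts.sum := Multiset.dvd_sum (even_of_bp_no_one hb h1)
  rw [l.parts_sum] at hdvd
  omega

def doubleP {m : ℕ} (l : Nat.Partition m) : Nat.Partition (2 * m) where
  parts := l.parts.map (fun p => 2 * p)
  parts_pos := by
    intro p hp
    obtain ⟨q, hq, rfl⟩ := Multiset.mem_map.1 hp
    have := l.parts_pos hq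
    omega
  parts_sum := by
    rw [Multiset.sum_map_mul_left, Multiset.map_id', l.parts_sum]

lemma Ncard_even (m : ℕ) : Ncard (2 * m) = bcard m := by
  classical
  rw [Ncard, bcard]
  symm
  refine Finset.card_bij' (i := fun l _ => doubleP l)
    (j := fun l hl => ⟨l.parts.map (fun p => p / 2), ?_, ?_⟩) ?_ ?_ ?_ ?_
  · intro p hp
    obtain ⟨q, hq, rfl⟩ := Multiset.mem_map.1 hp
    have hpos := l.parts_pos hq
    have hdvd := even_of_bp_no_one (mem_bp.1 (Finset.mem_filter.1 hl).1)
      (Finset.mem_filter.1 hl).2 q hq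
    omega
  · have hdvd := even_of_bp_no_one (mem_bp.1 (Finset.mem_filter.1 hl).1)
      (Finset.mem_filter.1 hl).2
    have h1 : 2 * (l.parts.map (fun p => p / 2)).sum = 2 * m := by
      rw [← Multiset.sum_map_mul_left]
      calc (Multiset.map (fun p => 2 * (p / 2)) l.parts).sum
          = (Multiset.map (fun p => p) l.parts).sum := by
            rw [Multiset.map_congr rfl (fun p hp => Nat.mul_div_cancel' (hdvd p hp))]
        _ = 2 * m := by rw [Multiset.map_id', l.parts_sum]
    omega
  · intro l hl
    refine Finset.mem_filter.2 ⟨mem_bp.2 ?_, ?_⟩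
    · intro p hp
      obtain ⟨q, hq, rfl⟩ := Multiset.mem_map.1 hp
      obtain ⟨i, rfl⟩ := mem_bp.1 hl q hq
      exact ⟨i + 1, by rw [pow_succ]; ring⟩
    · simp only [doubleP, Multiset.mem_map]
      rintro ⟨q, hq, hq2⟩
      omega
  · intro l hl
    rw [mem_bp]
    intro p hp
    obtain ⟨q, hq, rfl⟩ := Multiset.mem_map.1 hp
    obtain ⟨i, rfl⟩ := mem_bp.1 (Finset.mem_filter.1 hl).1 q hq
    have hne : (2 : ℕ) ^ i ≠ 1 := fun h => (Finset.mem_filter.1 hl).2 (h ▸ hq)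
    cases i with
    | zero => simp at hne
    | succ j => exact ⟨j, by rw [pow_succ]; omega⟩
  · intro l _
    apply Nat.Partition.ext
    simp only [doubleP, Multiset.map_map, Function.comp]
    calc Multiset.map (fun p => 2 * p / 2) l.parts
        = Multiset.map (fun p => p) l.parts :=
          Multiset.map_congr rfl (fun p _ => by omega)
      _ = l.parts := Multiset.map_id' _
  · intro l hl
    apply Nat.Partition.ext
    have hdvd := even_of_bp_no_one (mem_bp.1 (Finset.mem_filter.1 hl).1)
      (Finset.mem_filter.1 hl).2
    simp only [doubleP, Multiset.map_map, Function.comp]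
    calc Multiset.map (fun p => 2 * (p / 2)) l.parts
        = Multiset.map (fun p => p) l.parts :=
          Multiset.map_congr rfl (fun p hp => Nat.mul_div_cancel' (hdvd p hp))
      _ = l.parts := Multiset.map_id' _

lemma bcard_two_mul (m : ℕ) : bcard (2 * m) = ∑ k ∈ Finset.range (m + 1), bcard k := by
  induction m with
  | zero => simp
  | succ m ih =>
    have h1 : bcard (2 * m + 1 + 1) = Ncard (2 * m + 1 + 1) + bcard (2 * m + 1) :=
      bcard_succ _
    have h2 : bcard (2 * m + 1) = Ncard (2 * m + 1) + bcard (2 * m) := bcard_succ _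
    have h3 : Ncard (2 * m + 1) = 0 := Ncard_odd m
    have h4 : Ncard (2 * m + 1 + 1) = bcard (m + 1) := by
      rw [show 2 * m + 1 + 1 = 2 * (m + 1) from by ring]
      exact Ncard_even (m + 1)
    rw [show 2 * (m + 1) = 2 * m + 1 + 1 from by ring, h1, h4, h2, h3,
      Finset.sum_range_succ, ← ih]
    omega

lemma Tsum_eq (n : ℕ) : Tsum n = ∑ k ∈ Finset.range n, bcard k := by
  induction n with
  | zero =>
    rw [Tsum, Finset.sum_eq_zero, Finset.range_zero, Finset.sum_empty]
    intro l _
    have hz : ∀ x ∈ l.parts, x = 0 := Multiset.sum_eq_zero_iff.1 l.parts_sum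
    rw [Multiset.count_eq_zero]
    intro h
    exact one_ne_zero (hz 1 h)
  | succ n ih => rw [Tsum_succ, ih, Finset.sum_range_succ]

theorem stmt_5 (n : ℕ) (hn : 1 ≤ n) :
    (a (n + 1) : ℤ) - (a n : ℤ) = ((binaryPartitions (2 * n - 2)).card : ℤ) := by
  obtain ⟨m, rfl⟩ : ∃ m, n = m + 1 := ⟨n - 1, by omega⟩
  rw [a_succ]
  push_cast
  rw [Tsum_eq, show 2 * (m + 1) - 2 = 2 * m from by omega,
    show (binaryPartitions (2 * m)).card = bcard (2 * m) from rfl, bcard_two_mul]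
  push_cast
  ring
end

section
/- For every integer d ≥ 2 and all n ≥ 1, the forward difference a_{n+1}(d) - a_n(d) equals |P(dn - d, d)|, the number of d-ary partitions of d(n-1). -/
open Classical in
/-- The finset of `d`-ary partitions of `n`: partitions all of whose parts are powers of `d`. -/
noncomputable def daryPartitions (d n : ℕ) : Finset (Nat.Partition n) :=
  Finset.univ.filter fun l => ∀ p ∈ l.parts, ∃ i : ℕ, p = d ^ i

/-- `aD d n = m₁(ImP₂(n, d))`: the total number of parts equal to 1 in the image of `pre2`
on `d`-ary partitions of `n` with at least two parts; by injectivity this equals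
`∑_{λ ∈ P(n,d)} C(m₁(λ), 2)`. -/
noncomputable def aD (d n : ℕ) : ℕ :=
  ∑ l ∈ daryPartitions d n, Nat.choose (l.parts.count 1) 2


open Finset

lemma mem_dary {d n : ℕ} {l : Nat.Partition n} :
    l ∈ daryPartitions d n ↔ ∀ p ∈ l.parts, ∃ i : ℕ, p = d ^ i := by
  simp [daryPartitions]

/-- Add a part `1` to a partition. -/
def addOne {n : ℕ} (l : Nat.Partition n) : Nat.Partition (n + 1) where
  parts := 1 ::ₘ l.parts
  parts_pos := by
    intro p hp
    rcases Multiset.mem_cons.1 hp with h | h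
    · omega
    · exact l.parts_pos h
  parts_sum := by simp [l.parts_sum, Nat.add_comm]

/-- Remove a part `1` from a partition. -/
def removeOne {n : ℕ} (l : Nat.Partition (n + 1)) (h : (1 : ℕ) ∈ l.parts) :
    Nat.Partition n where
  parts := l.parts.erase 1
  parts_pos := fun hp => l.parts_pos (Multiset.mem_of_mem_erase hp)
  parts_sum := by
    have h2 : (1 ::ₘ l.parts.erase 1).sum = l.parts.sum := by
      rw [Multiset.cons_erase h]
    rw [Multiset.sum_cons, l.parts_sum] at h2
    omega

lemma key_bij (d : ℕ) (f : ℕ → ℕ) (hf : f 0 = 0) (n : ℕ) :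
    ∑ l ∈ daryPartitions d (n + 1), f (l.parts.count 1)
      = ∑ l ∈ daryPartitions d n, f (l.parts.count 1 + 1) := by
  classical
  rw [← Finset.sum_filter_add_sum_filter_not (daryPartitions d (n+1))
      (fun l => (1 : ℕ) ∈ l.parts)]
  have h2 : ∑ l ∈ (daryPartitions d (n+1)).filter (fun l => ¬ (1:ℕ) ∈ l.parts),
      f (l.parts.count 1) = 0 := by
    apply Finset.sum_eq_zero
    intro l hl
    rw [Finset.mem_filter] at hl
    rw [Multiset.count_eq_zero.2 hl.2, hf]
  rw [h2, add_zero]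
  refine Finset.sum_bij' (fun l hl => removeOne l (Finset.mem_filter.1 hl).2)
    (fun l _ => addOne l) ?_ ?_ ?_ ?_ ?_
  · intro l hl
    rw [mem_dary]
    intro p hp
    exact (mem_dary.1 (Finset.mem_filter.1 hl).1) p (Multiset.mem_of_mem_erase hp)
  · intro l hl
    refine Finset.mem_filter.2 ⟨?_, ?_⟩
    · rw [mem_dary]
      intro p hp
      rcases Multiset.mem_cons.1 hp with h | h
      · exact ⟨0, by simp [h]⟩
      · exact mem_dary.1 hl p h
    · exact Multiset.mem_cons_self 1 _
  · intro l hl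
    ext1
    show 1 ::ₘ l.parts.erase 1 = l.parts
    exact Multiset.cons_erase (Finset.mem_filter.1 hl).2
  · intro l hl
    ext1
    show (1 ::ₘ l.parts).erase 1 = l.parts
    exact Multiset.erase_cons_head 1 l.parts
  · intro l hl
    have h1 := (Finset.mem_filter.1 hl).2
    show f (l.parts.count 1) = f ((l.parts.erase 1).count 1 + 1)
    rw [Multiset.count_erase_self]
    have hc : 1 ≤ l.parts.count 1 := Multiset.one_le_count_iff_mem.2 h1
    congr 1
    omega

/-- Partitions of `n+k` with at least `k` ones biject with partitions of `n`. -/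
lemma count_ge (d n : ℕ) : ∀ k : ℕ,
    ((daryPartitions d (n + k)).filter (fun l => k ≤ l.parts.count 1)).card
      = (daryPartitions d n).card := by
  intro k
  induction k with
  | zero => simp
  | succ k ih =>
    classical
    rw [Finset.card_filter]
    have : (n + (k+1)) = (n + k) + 1 := by omega
    rw [this]
    rw [key_bij d (fun m => if k + 1 ≤ m then 1 else 0) (by simp)]
    have : ∀ l ∈ daryPartitions d (n + k),
        (if k + 1 ≤ l.parts.count 1 + 1 then 1 else 0)
          = (if k ≤ l.parts.count 1 then 1 else 0) := by
      intro l _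
      by_cases h : k ≤ l.parts.count 1 <;> simp [h] <;> omega
    rw [Finset.sum_congr rfl this, ← Finset.card_filter]
    exact ih

/-- Sum of number-of-ones recurrence. -/
lemma S_rec (d n : ℕ) :
    ∑ l ∈ daryPartitions d (n + 1), l.parts.count 1
      = (∑ l ∈ daryPartitions d n, l.parts.count 1) + (daryPartitions d n).card := by
  rw [key_bij d (fun m => m) rfl]
  rw [Finset.sum_add_distrib]
  simp

lemma sum_map_div {d : ℕ} (s : Multiset ℕ) (h : ∀ p ∈ s, d ∣ p) :
    (s.map (fun p => p / d)).sum * d = s.sum := by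
  induction s using Multiset.induction with
  | empty => simp
  | cons a s ih =>
    simp only [Multiset.map_cons, Multiset.sum_cons, add_mul]
    rw [Nat.div_mul_cancel (h a (Multiset.mem_cons_self a s)),
      ih (fun p hp => h p (Multiset.mem_cons_of_mem hp))]

def mulD (d : ℕ) (hd : 0 < d) {m : ℕ} (l : Nat.Partition m) : Nat.Partition (d * m) where
  parts := l.parts.map (fun p => d * p)
  parts_pos := by
    intro p hp
    obtain ⟨q, hq, rfl⟩ := Multiset.mem_map.1 hp
    exact Nat.mul_pos hd (l.parts_pos hq)
  parts_sum := by
    have : (l.parts.map (fun p => d * p)).sum = d * l.parts.sum := by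
      simpa using Multiset.sum_map_mul_left (s := l.parts) (a := d) (f := id)
    rw [this, l.parts_sum]

def divD (d : ℕ) (hd : 2 ≤ d) {m : ℕ} (l : Nat.Partition (d * m))
    (h : ∀ p ∈ l.parts, d ∣ p) : Nat.Partition m where
  parts := l.parts.map (fun p => p / d)
  parts_pos := by
    intro p hp
    obtain ⟨q, hq, rfl⟩ := Multiset.mem_map.1 hp
    exact Nat.div_pos (Nat.le_of_dvd (l.parts_pos hq) (h q hq)) (by omega)
  parts_sum := by
    have h2 := sum_map_div l.parts h
    rw [l.parts_sum] at h2
    have : (l.parts.map (fun p => p / d)).sum * d = m * d := by rw [h2, Nat.mul_comm]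
    exact Nat.eq_of_mul_eq_mul_right (by omega) this

lemma dvd_of_dary {d : ℕ} (hd : 2 ≤ d) {p : ℕ} (h : ∃ i : ℕ, p = d ^ i) (hp : p ≠ 1) :
    d ∣ p := by
  obtain ⟨i, rfl⟩ := h
  cases i with
  | zero => simp at hp
  | succ i => exact dvd_pow_self d (Nat.succ_ne_zero i)

lemma no_ones_card (d m : ℕ) (hd : 2 ≤ d) :
    ((daryPartitions d (d * m)).filter (fun l => (1:ℕ) ∉ l.parts)).card
      = (daryPartitions d m).card := by
  classical
  have key : ∀ l ∈ (daryPartitions d (d * m)).filter (fun l => (1:ℕ) ∉ l.parts),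
      ∀ p ∈ l.parts, d ∣ p := by
    intro l hl p hp
    rw [Finset.mem_filter] at hl
    refine dvd_of_dary hd (mem_dary.1 hl.1 p hp) ?_
    intro h1; rw [h1] at hp; exact hl.2 hp
  refine Finset.card_bij' (fun l hl => divD d hd l (key l hl))
    (fun l _ => mulD d (by omega) l) ?_ ?_ ?_ ?_
  · intro l hl
    rw [mem_dary]
    intro q hq
    obtain ⟨p, hp, rfl⟩ := Multiset.mem_map.1 hq
    obtain ⟨i, rfl⟩ := mem_dary.1 (Finset.mem_filter.1 hl).1 p hp
    rcases i with _ | i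
    · exact absurd (by simpa using hp) ((Finset.mem_filter.1 hl).2)
    · exact ⟨i, Nat.div_eq_of_eq_mul_left (by omega) (pow_succ d i)⟩
  · intro l hl
    refine Finset.mem_filter.2 ⟨?_, ?_⟩
    · rw [mem_dary]
      intro p hp
      obtain ⟨q, hq, rfl⟩ := Multiset.mem_map.1 hp
      obtain ⟨i, rfl⟩ := mem_dary.1 hl q hq
      exact ⟨i + 1, by rw [pow_succ, mul_comm]⟩
    · intro h1
      obtain ⟨q, hq, h1⟩ := Multiset.mem_map.1 h1
      have := l.parts_pos hq
      nlinarith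
  · intro l hl
    ext1
    show (l.parts.map _).map _ = l.parts
    rw [Multiset.map_map]
    exact (Multiset.map_congr rfl (fun p hp => Nat.mul_div_cancel' (key l hl p hp))).trans
      (Multiset.map_id _)
  · intro l hl
    ext1
    show (l.parts.map _).map _ = l.parts
    rw [Multiset.map_map]
    exact (Multiset.map_congr rfl (fun p _ => Nat.mul_div_cancel_left p (show 0 < d by omega))).trans
      (Multiset.map_id _)

lemma dvd_count_one {d n : ℕ} (hd : 2 ≤ d) (hn : d ∣ n) {l : Nat.Partition n}
    (hl : l ∈ daryPartitions d n) : d ∣ l.parts.count 1 := by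
  classical
  have hsplit : l.parts.filter (· = 1) + l.parts.filter (fun p => ¬ p = 1) = l.parts :=
    Multiset.filter_add_not _ _
  have h1 : (l.parts.filter (· = 1)).sum = l.parts.count 1 := by
    rw [Multiset.filter_eq', Multiset.sum_replicate, smul_eq_mul, mul_one]
  have h2 : d ∣ (l.parts.filter (fun p => ¬ p = 1)).sum := by
    apply Multiset.dvd_sum
    intro p hp
    rw [Multiset.mem_filter] at hp
    exact dvd_of_dary hd (mem_dary.1 hl p hp.1) hp.2
  have h3 : l.parts.count 1 + (l.parts.filter (fun p => ¬ p = 1)).sum = n := by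
    rw [← h1, ← Multiset.sum_add, hsplit, l.parts_sum]
  have h4 : l.parts.count 1 = n - (l.parts.filter (fun p => ¬ p = 1)).sum := by omega
  rw [h4]
  exact Nat.dvd_sub hn h2

lemma B_rec (d m : ℕ) (hd : 2 ≤ d) (hm : 1 ≤ m) :
    (daryPartitions d (d * m)).card
      = (daryPartitions d (d * m - d)).card + (daryPartitions d m).card := by
  classical
  rw [← Finset.card_filter_add_card_filter_not
    (s := daryPartitions d (d * m)) (p := fun l => (1:ℕ) ∈ l.parts)]
  rw [no_ones_card d m hd]
  congr 1
  have heq : (daryPartitions d (d * m)).filter (fun l => (1:ℕ) ∈ l.parts)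
      = (daryPartitions d (d * m)).filter (fun l => d ≤ l.parts.count 1) := by
    apply Finset.filter_congr
    intro l hl
    constructor
    · intro h1
      have hdvd := dvd_count_one hd ⟨m, rfl⟩ hl
      have hpos : 1 ≤ l.parts.count 1 := Multiset.one_le_count_iff_mem.2 h1
      exact Nat.le_of_dvd (by omega) hdvd
    · intro h
      exact Multiset.one_le_count_iff_mem.1 (by omega)
  rw [heq]
  have h2 := count_ge d (d * m - d) d
  have h3 : d * m - d + d = d * m := by
    have : d ≤ d * m := Nat.le_mul_of_pos_right d (by omega)
    omega
  rw [h3] at h2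
  exact h2

lemma S_zero (d : ℕ) : ∑ l ∈ daryPartitions d 0, l.parts.count 1 = 0 := by
  apply Finset.sum_eq_zero
  intro l _
  rw [Multiset.count_eq_zero]
  intro h
  have h1 := Multiset.single_le_sum (fun x _ => Nat.zero_le x) 1 h
  rw [l.parts_sum] at h1
  omega

lemma S_closed (d : ℕ) (hd : 2 ≤ d) : ∀ k : ℕ,
    ∑ l ∈ daryPartitions d (k + 1), l.parts.count 1 = (daryPartitions d (d * k)).card := by
  intro k
  induction k with
  | zero => rw [S_rec d 0, S_zero d, Nat.mul_zero, Nat.zero_add]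
  | succ k ih =>
    rw [S_rec d (k + 1), ih]
    have h1 := B_rec d (k + 1) hd (by omega)
    have h2 : d * (k + 1) - d = d * k := by rw [Nat.mul_succ]; omega
    rw [h2] at h1
    omega

lemma aD_step (d n : ℕ) :
    aD d (n + 1) = aD d n + ∑ l ∈ daryPartitions d n, l.parts.count 1 := by
  unfold aD
  rw [key_bij d (fun m => Nat.choose m 2) rfl]
  have : ∀ l ∈ daryPartitions d n,
      Nat.choose (l.parts.count 1 + 1) 2
        = Nat.choose (l.parts.count 1) 2 + l.parts.count 1 := by
    intro l _
    rw [Nat.choose_succ_succ]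
    rw [Nat.choose_one_right]
    exact Nat.add_comm _ _
  rw [Finset.sum_congr rfl this, Finset.sum_add_distrib]


theorem stmt_17 (d : ℕ) (hd : 2 ≤ d) (n : ℕ) (hn : 1 ≤ n) :
    (aD d (n + 1) : ℤ) - (aD d n : ℤ) = ((daryPartitions d (d * n - d)).card : ℤ) := by
  obtain ⟨k, rfl⟩ : ∃ k, n = k + 1 := ⟨n - 1, by omega⟩
  have h1 := aD_step d (k + 1)
  have h2 := S_closed d hd k
  have h3 : d * (k + 1) - d = d * k := by rw [Nat.mul_succ]; omega
  rw [h3, h1, h2]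
  push_cast
  ring
end
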